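/- Let λ₁,…,λₙ ∈ K satisfy λᵢ·λ_{n+1−i} = 0 for all i = 1,…,n, and let A ∈ Mₙ(K) be the skew-diagonal matrix with entries A_{n+1−i, i} = λᵢ and all other entries zero. Then A satisfies the numeric reflection equation, A² = 0, and Tr_q(A) = 0. -/

import Mathlib

open Matrix Kronecker

/-- The Hecke matrix `S = q·Σᵢ E_{ii}⊗E_{ii} + Σ_{i≠j} E_{ij}⊗E_{ji} + (q−q⁻¹)·Σ_{i<j} E_{ii}⊗E_{jj}`. -/
noncomputable def heckeS (K : Type*) [Field K] (n : ℕ) (q : K) :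
    Matrix (Fin n × Fin n) (Fin n × Fin n) K :=
  q • (∑ i : Fin n, Matrix.single i i (1 : K) ⊗ₖ Matrix.single i i (1 : K))
    + ∑ i : Fin n, ∑ j : Fin n,
        (if i ≠ j then Matrix.single i j (1 : K) ⊗ₖ Matrix.single j i (1 : K) else 0)
    + (q - q⁻¹) • ∑ i : Fin n, ∑ j : Fin n,
        (if i < j then Matrix.single i i (1 : K) ⊗ₖ Matrix.single j j (1 : K) else 0)

/-- The skew-diagonal matrix with `A_{n+1−i,i} = λᵢ` (0-indexed: `A_{r,c} = λ_c` when
`r + c + 1 = n`) and all other entries zero. -/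
def skewDiag {K : Type*} [Zero K] (n : ℕ) (lam : Fin n → K) : Matrix (Fin n) (Fin n) K :=
  Matrix.of fun r c => if (r : ℕ) + (c : ℕ) + 1 = n then lam c else 0

/-- The diagonal matrix `D = Σᵢ q^{−2i+2}·E_{ii}` defining the quantum trace
`Tr_q(M) = Tr(D·M)`. -/
noncomputable def qTraceD (K : Type*) [Field K] (n : ℕ) (q : K) : Matrix (Fin n) (Fin n) K :=
  Matrix.diagonal fun i : Fin n => q ^ (-(2 * (i : ℕ) : ℤ))

lemma ite_matrix_apply {K : Type*} [Zero K] {m p : Type*} (P : Prop) [Decidable P]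
    (M : Matrix m p K) (a : m) (b : p) :
    (if P then M else 0) a b = if P then M a b else 0 := by split_ifs <;> rfl

lemma skewDiag_apply {K : Type*} [Zero K] (n : ℕ) (lam : Fin n → K) (r c : Fin n) :
    skewDiag n lam r c = if c = r.rev then lam c else 0 := by
  have h1 : (r.rev : ℕ) = n - 1 - r := by rw [Fin.val_rev]; omega
  have : ((r : ℕ) + (c : ℕ) + 1 = n) ↔ c = r.rev := by
    rw [Fin.ext_iff, h1]; have := r.isLt; have := c.isLt; omega
  simp [skewDiag, this]

set_option maxHeartbeats 4000000 in
lemma heckeS_apply {K : Type*} [Field K] {n : ℕ} (q : K) (i j k l : Fin n) :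
    heckeS K n q (i, j) (k, l)
      = (if k = j ∧ l = i then (if i = j then q else 1) else 0)
        + (if i < j ∧ k = i ∧ l = j then q - q⁻¹ else 0) := by
  simp only [heckeS, Matrix.add_apply, Matrix.smul_apply, Matrix.sum_apply, smul_eq_mul,
    ite_matrix_apply, Matrix.kroneckerMap_apply]
  simp only [show ∀ a b c d : Fin n, Matrix.single a b (1:K) c d
    = if a = c ∧ b = d then (1:K) else 0 from fun _ _ _ _ => rfl]
  simp only [ite_and, mul_ite, mul_one, mul_zero, ite_mul, one_mul, zero_mul]
  simp only [Finset.sum_ite_eq, Finset.sum_ite_eq', Finset.mem_univ, if_true,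
    Finset.sum_ite_irrel, Finset.sum_const_zero]
  have h2 : ∀ x x1 : Fin n,
      (if x ≠ x1 then if x1 = j then if x = l then if x = i then if x1 = k then (1:K) else 0 else 0 else 0 else 0 else 0)
      = if x1 = j then (if x = i then (if i ≠ j ∧ l = i ∧ k = j then (1:K) else 0) else 0) else 0 := by
    intro x x1
    split_ifs <;> first
      | rfl
      | (exfalso; simp only [Fin.ext_iff, Fin.lt_def, ne_eq, not_lt, not_and, not_not] at *; omega)
  have h3 : ∀ x x1 : Fin n,
      (if x < x1 then if x1 = j then if x1 = l then if x = i then if x = k then (1:K) else 0 else 0 else 0 else 0 else 0)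
      = if x1 = j then (if x = i then (if i < j ∧ l = j ∧ k = i then (1:K) else 0) else 0) else 0 := by
    intro x x1
    split_ifs <;> first
      | rfl
      | (exfalso; simp only [Fin.ext_iff, Fin.lt_def, ne_eq, not_lt, not_and, not_not] at *; omega)
  simp only [h2, h3, Finset.sum_ite_eq', Finset.mem_univ, if_true]
  clear h2 h3
  split_ifs <;> try ring1
  all_goals (exfalso; simp only [Fin.ext_iff, Fin.lt_def, ne_eq, not_lt, not_and, not_not] at *; omega)

section Aux

variable {K : Type*} [Field K] {n : ℕ}

lemma mulA2_left (lam : Fin n → K) (M : Matrix (Fin n × Fin n) (Fin n × Fin n) K)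
    (x y : Fin n × Fin n) :
    (((1 : Matrix (Fin n) (Fin n) K) ⊗ₖ skewDiag n lam) * M) x y
      = lam x.2.rev * M (x.1, x.2.rev) y := by
  rw [Matrix.mul_apply, Fintype.sum_prod_type]
  simp only [Matrix.kroneckerMap_apply, Matrix.one_apply, skewDiag_apply,
    ite_mul, mul_ite, one_mul, zero_mul, mul_zero]
  simp [Finset.sum_ite_eq, Finset.sum_ite_eq']

lemma mulA2_right (lam : Fin n → K) (M : Matrix (Fin n × Fin n) (Fin n × Fin n) K)
    (x y : Fin n × Fin n) :
    (M * ((1 : Matrix (Fin n) (Fin n) K) ⊗ₖ skewDiag n lam)) x y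
      = M x (y.1, y.2.rev) * lam y.2 := by
  rw [Matrix.mul_apply, Fintype.sum_prod_type]
  simp only [Matrix.kroneckerMap_apply, Matrix.one_apply, skewDiag_apply]
  have hrev : ∀ d : Fin n, (y.2 = d.rev) ↔ (d = y.2.rev) := by
    intro d
    constructor
    · intro h; rw [h, Fin.rev_rev]
    · rintro rfl; rw [Fin.rev_rev]
  simp only [hrev]
  simp [Finset.sum_ite_eq, Finset.sum_ite_eq', mul_ite, ite_mul, mul_zero, zero_mul, mul_one]

lemma mulS_right (q : K) (M : Matrix (Fin n × Fin n) (Fin n × Fin n) K) (x y : Fin n × Fin n) :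
    (M * heckeS K n q) x y
      = M x (y.2, y.1) * (if y.2 = y.1 then q else 1)
        + (if y.1 < y.2 then M x y * (q - q⁻¹) else 0) := by
  obtain ⟨m, p⟩ := y
  rw [Matrix.mul_apply, Fintype.sum_prod_type]
  simp only [show ∀ k l : Fin n, heckeS K n q (k,l) (m,p) = _ from fun k l => heckeS_apply q k l m p]
  simp only [mul_add, ite_and, mul_ite, mul_one, mul_zero, ite_mul, zero_mul, one_mul]
  simp only [Finset.sum_add_distrib]
  have key : ∀ k l : Fin n,
      (if k < l then if m = k then if p = l then M x (k,l) * (q - q⁻¹) else 0 else 0 else 0)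
      = if m = k then if p = l then (if k < l then M x (k,l) * (q-q⁻¹) else 0) else 0 else 0 := by
    intros; split_ifs <;> rfl
  simp only [key, Finset.sum_ite_irrel, Finset.sum_ite_eq, Finset.sum_ite_eq',
    Finset.mem_univ, if_true, Finset.sum_const_zero]

lemma mulS_left (q : K) (M : Matrix (Fin n × Fin n) (Fin n × Fin n) K) (x y : Fin n × Fin n) :
    (heckeS K n q * M) x y
      = (if x.1 = x.2 then q else 1) * M (x.2, x.1) y
        + (if x.1 < x.2 then (q - q⁻¹) * M x y else 0) := by
  obtain ⟨i, j⟩ := x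
  rw [Matrix.mul_apply, Fintype.sum_prod_type]
  simp only [show ∀ k l : Fin n, heckeS K n q (i,j) (k,l) = _ from fun k l => heckeS_apply q i j k l]
  simp only [add_mul, ite_and, mul_ite, mul_one, mul_zero, ite_mul, zero_mul, one_mul]
  simp only [Finset.sum_add_distrib]
  simp only [Finset.sum_ite_irrel, Finset.sum_ite_eq, Finset.sum_ite_eq',
    Finset.mem_univ, if_true, Finset.sum_const_zero]

/-- The sandwich matrix `A₂ S A₂ = P (A ⊗ A)`. -/
noncomputable def sand (n : ℕ) (lam : Fin n → K) : Matrix (Fin n × Fin n) (Fin n × Fin n) K :=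
  Matrix.of fun x y =>
    if y.1 = x.2.rev ∧ y.2 = x.1.rev then lam x.2.rev * lam x.1.rev else 0

lemma conj_eq (q : K) (lam : Fin n → K) (hlam : ∀ i : Fin n, lam i * lam i.rev = 0) :
    ((1 : Matrix (Fin n) (Fin n) K) ⊗ₖ skewDiag n lam) * heckeS K n q
      * ((1 : Matrix (Fin n) (Fin n) K) ⊗ₖ skewDiag n lam) = sand n lam := by
  ext ⟨i, j⟩ ⟨m, p⟩
  rw [mulA2_right, mulA2_left]
  simp only [heckeS_apply, sand, Matrix.of_apply]
  by_cases h1 : m = j.rev <;> by_cases h2 : p = i.rev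
  · have pv : p.rev = i := by rw [h2, Fin.rev_rev]
    rw [if_pos (⟨h1, h2⟩ : m = j.rev ∧ p = i.rev), if_pos (⟨h1, pv⟩ : m = j.rev ∧ p.rev = i)]
    by_cases h3 : i = j.rev
    · have hc : ¬(i < j.rev ∧ m = i ∧ p.rev = j.rev) := by
        rintro ⟨hl, -, -⟩; rw [← h3] at hl; exact lt_irrefl i hl
      have hp : p = j := by rw [h2, h3, Fin.rev_rev]
      have hij : i.rev = j := by rw [h3, Fin.rev_rev]
      rw [if_pos h3, if_neg hc, hp, hij]
      linear_combination (q - 1) * hlam j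
    · have hc : ¬(i < j.rev ∧ m = i ∧ p.rev = j.rev) := by
        rintro ⟨-, hmi, -⟩; exact h3 (by rw [← hmi, h1])
      rw [if_neg h3, if_neg hc, h2]
      ring
  · have c1 : ¬(m = j.rev ∧ p.rev = i) := by
      rintro ⟨-, hh⟩; exact h2 (by rw [← hh, Fin.rev_rev])
    have c2 : ¬(i < j.rev ∧ m = i ∧ p.rev = j.rev) := by
      rintro ⟨hlt, hmi, -⟩; rw [h1] at hmi; rw [hmi] at hlt; exact lt_irrefl _ hlt
    have c3 : ¬(m = j.rev ∧ p = i.rev) := fun h => h2 h.2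
    rw [if_neg c1, if_neg c2, if_neg c3]
    ring
  · have c1 : ¬(m = j.rev ∧ p.rev = i) := fun h => h1 h.1
    have c2 : ¬(i < j.rev ∧ m = i ∧ p.rev = j.rev) := by
      rintro ⟨hlt, -, hpj⟩
      have hpj' : p = j := Fin.rev_injective hpj
      have hji : j = i.rev := by rw [← hpj', h2]
      have hji' : j.rev = i := by rw [hji, Fin.rev_rev]
      rw [hji'] at hlt; exact lt_irrefl i hlt
    have c3 : ¬(m = j.rev ∧ p = i.rev) := fun h => h1 h.1
    rw [if_neg c1, if_neg c2, if_neg c3]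
    ring
  · have c1 : ¬(m = j.rev ∧ p.rev = i) := fun h => h1 h.1
    have c3 : ¬(m = j.rev ∧ p = i.rev) := fun h => h1 h.1
    rw [if_neg c1, if_neg c3]
    by_cases h4 : i < j.rev ∧ m = i ∧ p.rev = j.rev
    · have hpj : p = j := Fin.rev_injective h4.2.2
      rw [if_pos h4, hpj]
      linear_combination (q - q⁻¹) * hlam j
    · rw [if_neg h4]
      ring

set_option maxHeartbeats 2000000 in
lemma sand_comm (q : K) (lam : Fin n → K) :
    sand n lam * heckeS K n q = heckeS K n q * sand n lam := by
  ext ⟨i, j⟩ ⟨m, p⟩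
  rw [mulS_right, mulS_left]
  simp only [sand, Matrix.of_apply]
  split_ifs <;> try ring1
  all_goals
    (exfalso;
     simp only [Fin.ext_iff, Fin.lt_def, Fin.val_rev, ne_eq, not_and, not_lt, not_not] at *;
     omega)

end Aux

/-- If `λᵢ·λ_{n+1−i} = 0` for all `i`, the skew-diagonal matrix `A` with entries `λᵢ` satisfies
the numeric reflection equation, `A² = 0`, and `Tr_q(A) = 0`. -/
theorem skewDiag_nilpotent_reflection (K : Type*) [Field K] (n : ℕ) (hn : 1 ≤ n)
    (q : K) (hq : q ≠ 0)
    (lam : Fin n → K) (hlam : ∀ i : Fin n, lam i * lam i.rev = 0) :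
    ((1 : Matrix (Fin n) (Fin n) K) ⊗ₖ skewDiag n lam) * heckeS K n q
        * ((1 : Matrix (Fin n) (Fin n) K) ⊗ₖ skewDiag n lam) * heckeS K n q
      = heckeS K n q * ((1 : Matrix (Fin n) (Fin n) K) ⊗ₖ skewDiag n lam)
        * heckeS K n q * ((1 : Matrix (Fin n) (Fin n) K) ⊗ₖ skewDiag n lam) ∧
    skewDiag n lam * skewDiag n lam = 0 ∧
    Matrix.trace (qTraceD K n q * skewDiag n lam) = 0 := by
  set A2 := (1 : Matrix (Fin n) (Fin n) K) ⊗ₖ skewDiag n lam with hA2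
  have h1 : A2 * heckeS K n q * A2 = sand n lam := conj_eq q lam hlam
  refine ⟨?_, ?_, ?_⟩
  · calc A2 * heckeS K n q * A2 * heckeS K n q
        = sand n lam * heckeS K n q := by rw [h1]
      _ = heckeS K n q * sand n lam := sand_comm q lam
      _ = heckeS K n q * (A2 * heckeS K n q * A2) := by rw [h1]
      _ = heckeS K n q * A2 * heckeS K n q * A2 := by
          rw [← Matrix.mul_assoc, ← Matrix.mul_assoc]
  · ext i j
    rw [Matrix.mul_apply, Matrix.zero_apply]
    have : ∀ k : Fin n, skewDiag n lam i k * skewDiag n lam k j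
        = if k = i.rev then (if j = k.rev then lam k * lam j else 0) else 0 := by
      intro k
      rw [skewDiag_apply, skewDiag_apply]
      split_ifs <;> ring
    simp only [this, Finset.sum_ite_eq', Finset.mem_univ, if_true]
    split_ifs with h
    · rw [h, Fin.rev_rev] at *
      have := hlam i
      linear_combination this
    · rfl
  · rw [Matrix.trace]
    apply Finset.sum_eq_zero
    intro i _
    rw [Matrix.diag_apply, qTraceD, Matrix.diagonal_mul, skewDiag_apply]
    split_ifs with h
    · have h0 := hlam i
      rw [← h] at h0
      rw [mul_self_eq_zero] at h0
      rw [h0, mul_zero]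
    · rw [mul_zero]
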